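/- arXiv:1701.03723 — 5 statements merged into one kernel-verified Lean document; each statement's English description precedes it below -/
import Mathlib

section
/- For integers k ≥ 1 and p ≥ 2, Σ_{n=1}^∞ ζ_n({1}_{p−1}) / (n(n+k)) = (1/k) · ( ζ(p) + ζ_k^⋆({1}_p) − ζ_k^⋆({1}_{p−1})/k ). -/
open Finset

/-- Multiple harmonic number `ζ_n({1}_m)`:
`ζ_n({1}_m) = ∑_{n ≥ n₁ > n₂ > ⋯ > n_m ≥ 1} 1/(n₁ ⋯ n_m)`, with `ζ_n({1}_0) = 1`. -/
noncomputable def mhn : ℕ → ℕ → ℝ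
  | _, 0 => 1
  | n, m + 1 => ∑ k ∈ Finset.Icc 1 n, mhn (k - 1) m / (k : ℝ)

/-- Multiple harmonic star number `ζ_n^⋆({1}_m)`:
`ζ_n^⋆({1}_m) = ∑_{n ≥ n₁ ≥ n₂ ≥ ⋯ ≥ n_m ≥ 1} 1/(n₁ ⋯ n_m)`, with `ζ_n^⋆({1}_0) = 1`. -/
noncomputable def mhsn : ℕ → ℕ → ℝ
  | _, 0 => 1
  | n, m + 1 => ∑ k ∈ Finset.Icc 1 n, mhsn k m / (k : ℝ)

/-- Multiple harmonic number with repeated real argument `p`: `ζ_n({p}_m)`. -/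
noncomputable def mhnP (p : ℝ) : ℕ → ℕ → ℝ
  | _, 0 => 1
  | n, m + 1 => ∑ k ∈ Finset.Icc 1 n, mhnP p (k - 1) m / (k : ℝ) ^ p

/-- Multiple harmonic star number with repeated real argument `p`: `ζ_n^⋆({p}_m)`. -/
noncomputable def mhsnP (p : ℝ) : ℕ → ℕ → ℝ
  | _, 0 => 1
  | n, m + 1 => ∑ k ∈ Finset.Icc 1 n, mhsnP p k m / (k : ℝ) ^ p

/-- Generalized harmonic number `H_n^{(p)} = ∑_{j=1}^n 1/j^p`. -/
noncomputable def genH (p n : ℕ) : ℝ := ∑ j ∈ Finset.Icc 1 n, 1 / (j : ℝ) ^ p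

/-- Auxiliary: `hypAux m n k = h_n^{(m+1)}(k)` for `k ≥ 1` (peel off the weak outer indices). -/
noncomputable def hypAux : ℕ → ℕ → ℕ → ℝ
  | 0, n, k => mhn n k
  | m + 1, n, k => ∑ j ∈ Finset.Icc 1 n, hypAux m j k

/-- Generalized hyperharmonic number `h_n^{(m)}(k)`, with the convention
`h_n^{(m)}(0) = C(m+n-1, m-1)`. -/
noncomputable def gh (n m k : ℕ) : ℝ :=
  if k = 0 then (Nat.choose (m + n - 1) (m - 1) : ℝ) else hypAux (m - 1) n k

/-- Unsigned Stirling number of the first kind, defined by the standard recurrence,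
equivalently by `x(x+1)⋯(x+n-1) = ∑_{k=0}^n [n; k] xᵏ`. -/
def stir1 : ℕ → ℕ → ℕ
  | 0, 0 => 1
  | 0, _ + 1 => 0
  | _ + 1, 0 => 0
  | n + 1, k + 1 => stir1 n k + n * stir1 n (k + 1)

/-- Multiple zeta value `ζ(p, {1}_m)`. -/
noncomputable def mzv (p m : ℕ) : ℝ := ∑' n : ℕ, mhn n m / (n + 1 : ℝ) ^ p

/-- Multiple zeta star value `ζ^⋆(p, {1}_m)`. -/
noncomputable def mzvStar (p m : ℕ) : ℝ := ∑' n : ℕ, mhsn (n + 1) m / (n + 1 : ℝ) ^ p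

/-- Riemann zeta value `ζ(p) = ∑_{n=1}^∞ 1/n^p`. -/
noncomputable def rz (p : ℕ) : ℝ := ∑' n : ℕ, 1 / (n + 1 : ℝ) ^ p

/-- `U_{m,r}(p) = ∑_{n=1}^∞ ζ_{n+r}({1}_m)/n^p`. -/
noncomputable def Usum (m r p : ℕ) : ℝ := ∑' n : ℕ, mhn (n + 1 + r) m / (n + 1 : ℝ) ^ p

/-- Strictly decreasing `q`-fold sum `Ā_q(n) = ∑_{1 ≤ k_q < ⋯ < k₁ ≤ n} a_{k₁}⋯a_{k_q}`,
with `Ā_0(n) = 1` (so `Ā_q(n) = 0` when `n < q`). -/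
def sdSum {R : Type*} [Semiring R] (a : ℕ → R) : ℕ → ℕ → R
  | _, 0 => 1
  | n, q + 1 => ∑ k ∈ Finset.Icc 1 n, a k * sdSum a (k - 1) q

/-- Weakly decreasing `q`-fold sum `A_q(n) = ∑_{1 ≤ k_q ≤ ⋯ ≤ k₁ ≤ n} a_{k₁}⋯a_{k_q}`,
with `A_0(n) = 1`. -/
def wdSum {R : Type*} [Semiring R] (a : ℕ → R) : ℕ → ℕ → R
  | _, 0 => 1
  | n, q + 1 => ∑ k ∈ Finset.Icc 1 n, a k * wdSum a k q


open scoped ENNReal NNReal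
open Filter Topology

lemma mhn_succ (n m : ℕ) : mhn n (m + 1) = ∑ r ∈ range n, mhn r m / ((r : ℝ) + 1) := by
  rw [mhn]
  rw [show Finset.Icc 1 n = Finset.Ico 1 (n+1) by rfl, Finset.sum_Ico_eq_sum_range]
  simp only [Nat.add_sub_cancel]
  refine Finset.sum_congr rfl fun r _ => ?_
  congr 1
  · congr 1; omega
  · push_cast; ring

lemma mhsn_succ (n m : ℕ) : mhsn n (m + 1) = ∑ r ∈ range n, mhsn (r+1) m / ((r : ℝ) + 1) := by
  rw [mhsn]
  rw [show Finset.Icc 1 n = Finset.Ico 1 (n+1) by rfl, Finset.sum_Ico_eq_sum_range]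
  simp only [Nat.add_sub_cancel]
  refine Finset.sum_congr rfl fun r _ => ?_
  congr 1
  · congr 1; omega
  · push_cast; ring

lemma mhn_nonneg (m n : ℕ) : 0 ≤ mhn n m := by
  induction m generalizing n with
  | zero => rw [mhn]; norm_num
  | succ m ih =>
    rw [mhn_succ]
    exact Finset.sum_nonneg fun r _ => div_nonneg (ih r) (by positivity)

lemma mhsn_nonneg (m n : ℕ) : 0 ≤ mhsn n m := by
  induction m generalizing n with
  | zero => rw [mhsn]; norm_num
  | succ m ih =>
    rw [mhsn_succ]
    exact Finset.sum_nonneg fun r _ => div_nonneg (ih (r+1)) (by positivity)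

lemma mhn_zero (n : ℕ) : mhn n 0 = 1 := by rw [mhn]

/-- `c(m,n) = m! n! / (m+n)!`. -/
noncomputable def creal (m n : ℕ) : ℝ := (Nat.factorial m) * (Nat.factorial n) / (Nat.factorial (m + n))

lemma creal_pos (m n : ℕ) : 0 < creal m n := by
  unfold creal
  positivity

lemma creal_symm (m n : ℕ) : creal m n = creal n m := by
  unfold creal; rw [add_comm, mul_comm]

lemma creal_zero (m : ℕ) : creal m 0 = 1 := by
  unfold creal
  have : (Nat.factorial m : ℝ) ≠ 0 := by positivity
  simp [Nat.factorial, this]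

lemma creal_tele (m n : ℕ) (hm : 1 ≤ m) :
    creal m n / m - creal m (n+1) / m = creal m (n+1) / ((n : ℝ) + 1) := by
  unfold creal
  have h1 : (Nat.factorial (m + (n+1)) : ℝ) = (m + n + 1) * Nat.factorial (m + n) := by
    rw [show m + (n+1) = (m+n) + 1 by ring, Nat.factorial_succ]; push_cast; ring
  have h2 : (Nat.factorial (n+1) : ℝ) = (n + 1) * Nat.factorial n := by
    rw [Nat.factorial_succ]; push_cast; ring
  have hfm : (Nat.factorial (m+n) : ℝ) > 0 := by positivity
  have hmp : (m : ℝ) ≥ 1 := by exact_mod_cast hm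
  rw [h1, h2]
  field_simp
  ring

lemma creal_le (m n : ℕ) (hm : 1 ≤ m) : creal m n ≤ (Nat.factorial m) / ((n : ℝ) + 1) := by
  unfold creal
  rw [div_le_div_iff₀ (by positivity) (by positivity)]
  have h : ((n+1) * Nat.factorial n : ℕ) ≤ Nat.factorial (m + n) := by
    rw [← Nat.factorial_succ]
    exact Nat.factorial_le (by omega)
  calc (Nat.factorial m : ℝ) * Nat.factorial n * ((n:ℝ)+1)
      = (Nat.factorial m : ℝ) * ((n+1) * Nat.factorial n : ℕ) := by push_cast; ring
    _ ≤ (Nat.factorial m : ℝ) * Nat.factorial (m+n) := by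
        exact mul_le_mul_of_nonneg_left (by exact_mod_cast h) (by positivity)

open Filter Topology

/-- Telescoping: if `f` is nonneg, antitone-ish and tends to 0 then `∑ (f n - f (n+1)) = f 0`. -/
lemma hasSum_tele {f : ℕ → ℝ} (hnn : ∀ n, 0 ≤ f n) (hmono : ∀ n, f (n+1) ≤ f n)
    (h0 : Tendsto f atTop (𝓝 0)) : HasSum (fun n => f n - f (n+1)) (f 0) := by
  have hps : ∀ N, ∑ i ∈ range N, (f i - f (i+1)) = f 0 - f N := fun N => Finset.sum_range_sub' f N
  have hsum : Summable (fun n => f n - f (n+1)) := by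
    apply summable_of_sum_range_le (fun n => sub_nonneg.2 (hmono n))
    intro n; rw [hps]; linarith [hnn n]
  have h1 : Tendsto (fun N => ∑ i ∈ range N, (f i - f (i+1))) atTop (𝓝 (f 0)) := by
    simp only [hps]
    simpa using tendsto_const_nhds.sub h0
  have h2 := hsum.hasSum.tendsto_sum_nat
  have := tendsto_nhds_unique h2 h1
  rw [← this]
  exact hsum.hasSum

/-- `∑_{t≥0} 1/((t+c)(t+c+1)) = 1/c` for `c ≥ 1`. -/
lemma hasSum_inv_mul (c : ℕ) (hc : 1 ≤ c) :
    HasSum (fun t : ℕ => 1 / (((t:ℝ) + c) * ((t:ℝ) + c + 1))) (1 / (c:ℝ)) := by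
  have hcr : (1:ℝ) ≤ (c:ℝ) := by exact_mod_cast hc
  have key := hasSum_tele (f := fun t : ℕ => 1 / ((t:ℝ) + c))
    (fun n => by positivity)
    (fun n => by
      apply div_le_div_of_nonneg_left (by norm_num) (by push_cast; linarith) (by push_cast; linarith))
    ?_
  · convert key using 2 with t
    · have h1 : ((t:ℝ)+c) ≠ 0 := by positivity
      have h2 : ((t:ℝ)+c+1) ≠ 0 := by positivity
      push_cast
      rw [div_sub_div _ _ h1 (by push_cast at h2 ⊢; linarith)]
      push_cast
      congr 1
      · ring
      · ring
    · norm_num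
  · simp only [one_div]
    apply Tendsto.comp tendsto_inv_atTop_zero
    apply tendsto_atTop_add_const_right
    exact tendsto_natCast_atTop_atTop


/-- Transport relation: `∑_{n' > n} c(m,n')/n' = c(m,n)/m` for `m ≥ 1`. -/
lemma hasSum_creal (m n : ℕ) (hm : 1 ≤ m) :
    HasSum (fun j : ℕ => creal m (n + 1 + j) / ((n:ℝ) + 1 + j)) (creal m n / m) := by
  have ht : ∀ j : ℕ, creal m (n+j) / m - creal m (n+j+1) / m = creal m (n+j+1) / ((n:ℝ) + j + 1) := by
    intro j
    have := creal_tele m (n + j) hm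
    rw [show ((n+j:ℕ):ℝ) + 1 = (n:ℝ) + j + 1 by push_cast; ring] at this
    convert this using 3 <;> omega
  have key := hasSum_tele (f := fun j : ℕ => creal m (n + j) / m)
    (fun j => by have := (creal_pos m (n+j)).le; positivity)
    (fun j => by
      show creal m (n+(j+1)) / (m:ℝ) ≤ creal m (n+j) / m
      have h1 := ht j
      have h2 : 0 ≤ creal m (n+j+1) / ((n:ℝ) + j + 1) := by
        have := (creal_pos m (n+j+1)).le; positivity
      rw [show n+(j+1) = n+j+1 by omega]
      linarith)
    ?_
  · convert key using 2 with j
    · show creal m (n+1+j) / ((n:ℝ)+1+j) = creal m (n+j) / m - creal m (n+(j+1)) / m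
      rw [show n+(j+1) = n+j+1 by omega, ht j, show n+1+j = n+j+1 by omega]
      ring_nf
    · simp
  · have hb : ∀ j : ℕ, creal m (n + j) / m ≤ (Nat.factorial m) / ((j:ℝ) + 1) := by
      intro j
      have h1 := creal_le m (n + j) hm
      have h2 : creal m (n+j) / m ≤ creal m (n+j) := by
        apply div_le_self (creal_pos m (n+j)).le
        exact_mod_cast hm
      have h3 : (Nat.factorial m : ℝ) / (((n+j:ℕ):ℝ) + 1) ≤ (Nat.factorial m) / ((j:ℝ)+1) := by
        apply div_le_div_of_nonneg_left (by positivity) (by positivity)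
        push_cast; linarith
      linarith
    have hnn : ∀ j : ℕ, 0 ≤ creal m (n + j) / m := fun j => by
      have := (creal_pos m (n+j)).le; positivity
    apply squeeze_zero hnn hb
    have : Tendsto (fun j : ℕ => 1 / ((j:ℝ) + 1)) atTop (𝓝 0) := by
      simp only [one_div]
      apply Tendsto.comp tendsto_inv_atTop_zero
      apply tendsto_atTop_add_const_right
      exact tendsto_natCast_atTop_atTop
    have h4 := this.const_mul (Nat.factorial m : ℝ)
    simp only [mul_one_div, mul_zero] at h4
    exact h4

lemma ofReal_tsum_hasSum {f : ℕ → ℝ} (hnn : ∀ n, 0 ≤ f n) {a : ℝ} (h : HasSum f a) :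
    ∑' n, ENNReal.ofReal (f n) = ENNReal.ofReal a := by
  rw [← h.tsum_eq, ← ENNReal.ofReal_tsum_of_nonneg hnn h.summable]

lemma hasSum_of_ennreal {f : ℕ → ℝ} (hnn : ∀ n, 0 ≤ f n) {c : ℝ} (hc : 0 ≤ c)
    (h : ∑' n, ENNReal.ofReal (f n) = ENNReal.ofReal c) : HasSum f c := by
  have hne : ∑' n, ENNReal.ofReal (f n) ≠ ⊤ := by rw [h]; exact ENNReal.ofReal_ne_top
  have hsum : Summable f := by
    have := ENNReal.summable_toReal hne
    refine this.congr fun n => ?_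
    exact ENNReal.toReal_ofReal (hnn n)
  have h2 : ENNReal.ofReal (∑' n, f n) = ENNReal.ofReal c := by
    rw [ENNReal.ofReal_tsum_of_nonneg hnn hsum, h]
  have h3 := (ENNReal.ofReal_eq_ofReal_iff (tsum_nonneg hnn) hc).1 h2
  rw [← h3]
  exact hsum.hasSum

/-- Swap: `∑_{b'} (∑_{r<b'} g r) h b' = ∑_b g b ∑_{b'>b} h b'` in `ℝ≥0∞`. -/
lemma swapE (g h : ℕ → ℝ≥0∞) :
    ∑' b : ℕ, (∑ r ∈ range b, g r) * h b = ∑' b : ℕ, g b * ∑' j : ℕ, h (b + 1 + j) := by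
  have step1 : ∀ b : ℕ, g b * ∑' j : ℕ, h (b + 1 + j)
      = ∑' b' : ℕ, (if b < b' then g b * h b' else 0) := by
    intro b
    rw [← ENNReal.tsum_mul_left]
    have hinj : Function.Injective (fun j : ℕ => b + 1 + j) := fun x y hxy => by simpa using hxy
    rw [← hinj.tsum_eq (f := fun b' => if b < b' then g b * h b' else 0)]
    · exact tsum_congr fun j => (if_pos (by omega)).symm
    · intro b' hb'
      simp only [Function.mem_support, ne_eq] at hb'
      have hlt : b < b' := by
        by_contra hcon
        exact hb' (if_neg hcon)
      exact ⟨b' - b - 1, show b + 1 + (b' - b - 1) = b' by omega⟩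
  calc ∑' b : ℕ, (∑ r ∈ range b, g r) * h b
      = ∑' b' : ℕ, ∑' b : ℕ, (if b < b' then g b * h b' else 0) := by
        refine tsum_congr fun b' => ?_
        rw [tsum_eq_sum (s := range b') (fun b hb => if_neg (by simp at hb; omega))]
        rw [Finset.sum_mul]
        exact (Finset.sum_congr rfl fun r hr => if_pos (by simp at hr; omega)).symm
    _ = ∑' b : ℕ, ∑' b' : ℕ, (if b < b' then g b * h b' else 0) := ENNReal.tsum_comm
    _ = ∑' b : ℕ, g b * ∑' j : ℕ, h (b + 1 + j) := tsum_congr fun b => (step1 b).symm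

lemma sum_tele_aux (x : ℝ) (hx : 0 < x) (k : ℕ) :
    ∑ i ∈ range k, 1 / ((x + i) * (x + i + 1)) = 1 / x - 1 / (x + k) := by
  induction k with
  | zero => simp
  | succ k ih =>
    rw [Finset.sum_range_succ, ih]
    have h1 : x + k > 0 := by positivity
    have h2 : x + k + 1 > 0 := by linarith
    push_cast
    field_simp
    ring

lemma pf1 (x : ℝ) (hx : 0 < x) (k : ℕ) (hk : 1 ≤ k) :
    1 / (x * (x + k)) = (1 / k) * ∑ i ∈ range k, 1 / ((x + i) * (x + i + 1)) := by
  rw [sum_tele_aux x hx k]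
  have hk1 : (1:ℝ) ≤ (k:ℝ) := by exact_mod_cast hk
  have h1 : x + k > 0 := by linarith
  have hk0 : (k:ℝ) ≠ 0 := by positivity
  field_simp
  ring

/-- Tail: `∑_{j≥0} 1/((r+1+j)(r+1+j+k)) = (1/k) ∑_{i<k} 1/(r+1+i)`. -/
lemma hasSum_tail (r k : ℕ) (hk : 1 ≤ k) :
    HasSum (fun j : ℕ => 1 / (((r:ℝ) + 1 + j) * ((r:ℝ) + 1 + j + k)))
      ((1 / (k:ℝ)) * ∑ i ∈ range k, 1 / ((r:ℝ) + 1 + i)) := by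
  have H : ∀ i ∈ range k, HasSum
      (fun j : ℕ => (1/(k:ℝ)) * (1 / (((j:ℝ) + ((r+1+i:ℕ):ℝ)) * ((j:ℝ) + ((r+1+i:ℕ):ℝ) + 1))))
      ((1/(k:ℝ)) * (1 / ((r+1+i:ℕ):ℝ))) :=
    fun i _ => (hasSum_inv_mul (r+1+i) (by omega)).mul_left _
  have Hsum := hasSum_sum H
  convert Hsum using 1
  · funext j
    rw [← Finset.mul_sum]
    have hx : (0:ℝ) < (r:ℝ) + 1 + j := by positivity
    rw [pf1 _ hx k hk]
    congr 1
    refine Finset.sum_congr rfl fun i _ => ?_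
    push_cast
    ring_nf
  · rw [← Finset.mul_sum]
    congr 1
    refine Finset.sum_congr rfl fun i _ => ?_
    push_cast
    ring_nf

lemma mhsn_zero (n : ℕ) : mhsn n 0 = 1 := by rw [mhsn]

lemma mhsn_one (k : ℕ) : mhsn k 1 = ∑ i ∈ range k, 1 / ((i:ℝ) + 1) := by
  rw [mhsn_succ]
  exact Finset.sum_congr rfl fun i _ => by rw [mhsn_zero]

/-- Key Lemma A: `∑_{n≥1} ζ_{n-1}({1}_m)/(n(n+k)) = ζ_k^⋆({1}_{m+1})/k`. -/
lemma lemmaA : ∀ (m k : ℕ), 1 ≤ k →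
    ∑' b : ℕ, ENNReal.ofReal (mhn b m / (((b:ℝ) + 1) * ((b:ℝ) + 1 + k)))
      = ENNReal.ofReal (mhsn k (m+1) / k) := by
  intro m
  induction m with
  | zero =>
    intro k hk
    have ht := hasSum_tail 0 k hk
    have h1 : ∑' b : ℕ, ENNReal.ofReal (mhn b 0 / (((b:ℝ) + 1) * ((b:ℝ) + 1 + k)))
        = ENNReal.ofReal ((1 / (k:ℝ)) * ∑ i ∈ range k, 1 / ((0:ℝ) + 1 + i)) := by
      apply ofReal_tsum_hasSum
      · intro b
        have := mhn_nonneg 0 b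
        positivity
      · convert ht using 2 with b
        · rw [mhn_zero]
          push_cast
          ring_nf
        · norm_num
    rw [h1, mhsn_one]
    congr 1
    rw [Finset.sum_div, Finset.mul_sum]
    refine Finset.sum_congr rfl fun i _ => ?_
    ring
  | succ m ih =>
    intro k hk
    set g : ℕ → ℝ≥0∞ := fun r => ENNReal.ofReal (mhn r m / ((r:ℝ) + 1)) with hg
    set h : ℕ → ℝ≥0∞ := fun b => ENNReal.ofReal (1 / (((b:ℝ) + 1) * ((b:ℝ) + 1 + k))) with hh
    have hstep : ∀ b : ℕ, ENNReal.ofReal (mhn b (m+1) / (((b:ℝ) + 1) * ((b:ℝ) + 1 + k)))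
        = (∑ r ∈ range b, g r) * h b := by
      intro b
      rw [mhn_succ, Finset.sum_div]
      rw [ENNReal.ofReal_sum_of_nonneg (fun r _ => by
        have h1 := mhn_nonneg m r; positivity)]
      rw [Finset.sum_mul]
      refine Finset.sum_congr rfl fun r _ => ?_
      rw [hg, hh]
      rw [← ENNReal.ofReal_mul (by have := mhn_nonneg m r; positivity)]
      congr 1
      field_simp
    calc ∑' b : ℕ, ENNReal.ofReal (mhn b (m+1) / (((b:ℝ) + 1) * ((b:ℝ) + 1 + k)))
        = ∑' b : ℕ, (∑ r ∈ range b, g r) * h b := tsum_congr hstep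
      _ = ∑' b : ℕ, g b * ∑' j : ℕ, h (b + 1 + j) := swapE g h
      _ = ∑' b : ℕ, ∑ i ∈ range k, ENNReal.ofReal ((1/(k:ℝ)) *
            (mhn b m / (((b:ℝ) + 1) * (((b:ℝ) + 1) + ((i:ℝ)+1))))) := by
          refine tsum_congr fun b => ?_
          have hin : ∑' j : ℕ, h (b + 1 + j)
              = ENNReal.ofReal ((1 / (k:ℝ)) * ∑ i ∈ range k, 1 / (((b:ℝ)+1) + 1 + i)) := by
            apply ofReal_tsum_hasSum (fun j => by positivity)
            have := hasSum_tail (b+1) k hk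
            convert this using 2 with j
            · push_cast; ring_nf
            · simp only [one_div]; push_cast; ring_nf
          rw [hin, hg]
          rw [← ENNReal.ofReal_mul (by have := mhn_nonneg m b; positivity)]
          rw [← ENNReal.ofReal_sum_of_nonneg (fun i _ => by
            have := mhn_nonneg m b; positivity)]
          congr 1
          rw [Finset.mul_sum, Finset.mul_sum]
          refine Finset.sum_congr rfl fun i _ => ?_
          simp only [div_eq_mul_inv, mul_inv, one_mul]
          ring
      _ = ∑ i ∈ range k, ∑' b : ℕ, ENNReal.ofReal ((1/(k:ℝ)) *
            (mhn b m / (((b:ℝ) + 1) * (((b:ℝ) + 1) + ((i:ℝ)+1))))) :=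
          Summable.tsum_finsetSum (fun i _ => ENNReal.summable)
      _ = ∑ i ∈ range k, ENNReal.ofReal (1/(k:ℝ)) *
            ENNReal.ofReal (mhsn (i+1) (m+1) / ((i:ℝ)+1)) := by
          refine Finset.sum_congr rfl fun i _ => ?_
          have hcon : ∀ b : ℕ, ENNReal.ofReal ((1/(k:ℝ)) *
              (mhn b m / (((b:ℝ) + 1) * (((b:ℝ) + 1) + ((i:ℝ)+1)))))
              = ENNReal.ofReal (1/(k:ℝ)) *
                ENNReal.ofReal (mhn b m / (((b:ℝ) + 1) * (((b:ℝ) + 1) + ((i+1:ℕ):ℝ)))) := by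
            intro b
            rw [← ENNReal.ofReal_mul (by positivity)]
            congr 2
            push_cast
            ring
          simp_rw [hcon]
          rw [ENNReal.tsum_mul_left]
          congr 1
          rw [ih (i+1) (by omega)]
          norm_cast
      _ = ENNReal.ofReal (mhsn k (m+2) / k) := by
          rw [show (m+2) = (m+1)+1 by rfl, mhsn_succ]
          rw [Finset.sum_div, ENNReal.ofReal_sum_of_nonneg (fun i _ => by
            have := mhsn_nonneg (m+1) (i+1); positivity)]
          refine Finset.sum_congr rfl fun i _ => ?_
          rw [← ENNReal.ofReal_mul (by positivity)]
          congr 1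
          simp only [div_eq_mul_inv, mul_inv, one_mul]
          push_cast
          ring

/-- Seki–Yamamoto connected-sum chain for Euler's theorem. -/
lemma eulerAux : ∀ (m e : ℕ), 1 ≤ e →
    ∑' a : ℕ, ∑' b : ℕ, ENNReal.ofReal
        (mhn b m * creal (a+1) (b+1) / (((b:ℝ)+1) * ((a:ℝ)+1)^e))
      = ∑' i : ℕ, ENNReal.ofReal (1 / ((i:ℝ)+1)^(e+m+1)) := by
  intro m
  induction m with
  | zero =>
    intro e he
    refine tsum_congr fun a => ?_
    have hc := (hasSum_creal (a+1) 0 (by omega)).mul_left (1 / ((a:ℝ)+1)^e)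
    have h1 : ∑' b : ℕ, ENNReal.ofReal
        (mhn b 0 * creal (a+1) (b+1) / (((b:ℝ)+1) * ((a:ℝ)+1)^e))
        = ENNReal.ofReal (1 / ((a:ℝ)+1)^e * (creal (a+1) 0 / ((a+1:ℕ):ℝ))) := by
      apply ofReal_tsum_hasSum (fun b => by
        have h2 := (creal_pos (a+1) (b+1)).le
        have h3 := mhn_nonneg 0 b
        positivity)
      convert hc using 2 with b
      on_goal 1 => rfl
      rw [mhn_zero]
      push_cast
      simp only [div_eq_mul_inv, mul_inv, one_mul]
      ring_nf
    rw [h1, creal_zero]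
    congr 1
    push_cast
    rw [pow_succ]
    simp only [div_eq_mul_inv, mul_inv, one_mul]
    try ring
  | succ m ih =>
    intro e he
    have key : ∀ a : ℕ, ∑' b : ℕ, ENNReal.ofReal
        (mhn b (m+1) * creal (a+1) (b+1) / (((b:ℝ)+1) * ((a:ℝ)+1)^e))
        = ∑' r : ℕ, ENNReal.ofReal
        (mhn r m * creal (a+1) (r+1) / (((r:ℝ)+1) * ((a:ℝ)+1)^(e+1))) := by
      intro a
      set g : ℕ → ℝ≥0∞ := fun r => ENNReal.ofReal (mhn r m / ((r:ℝ) + 1)) with hg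
      set h : ℕ → ℝ≥0∞ := fun b =>
        ENNReal.ofReal (creal (a+1) (b+1) / (((b:ℝ)+1) * ((a:ℝ)+1)^e)) with hh
      have hstep : ∀ b : ℕ, ENNReal.ofReal
          (mhn b (m+1) * creal (a+1) (b+1) / (((b:ℝ)+1) * ((a:ℝ)+1)^e))
          = (∑ r ∈ range b, g r) * h b := by
        intro b
        rw [mhn_succ, Finset.sum_mul, Finset.sum_div]
        rw [ENNReal.ofReal_sum_of_nonneg (fun r _ => by
          have h1 := mhn_nonneg m r
          have h2 := (creal_pos (a+1) (b+1)).le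
          positivity)]
        rw [Finset.sum_mul]
        refine Finset.sum_congr rfl fun r _ => ?_
        rw [hg, hh, ← ENNReal.ofReal_mul (by have := mhn_nonneg m r; positivity)]
        congr 1
        simp only [div_eq_mul_inv, mul_inv, one_mul]
        ring
      calc ∑' b : ℕ, ENNReal.ofReal
            (mhn b (m+1) * creal (a+1) (b+1) / (((b:ℝ)+1) * ((a:ℝ)+1)^e))
          = ∑' b : ℕ, (∑ r ∈ range b, g r) * h b := tsum_congr hstep
        _ = ∑' r : ℕ, g r * ∑' j : ℕ, h (r + 1 + j) := swapE g h
        _ = ∑' r : ℕ, ENNReal.ofReal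
            (mhn r m * creal (a+1) (r+1) / (((r:ℝ)+1) * ((a:ℝ)+1)^(e+1))) := by
          refine tsum_congr fun r => ?_
          have hc := (hasSum_creal (a+1) (r+1) (by omega)).mul_left (1 / ((a:ℝ)+1)^e)
          have hin : ∑' j : ℕ, h (r + 1 + j)
              = ENNReal.ofReal (1 / ((a:ℝ)+1)^e * (creal (a+1) (r+1) / ((a+1:ℕ):ℝ))) := by
            apply ofReal_tsum_hasSum (fun j => by
              have h2 := (creal_pos (a+1) (r+1+j+1)).le
              positivity)
            convert hc using 2 with j
            on_goal 1 => rfl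
            push_cast
            rw [show r + 1 + j + 1 = r + 1 + 1 + j by omega]
            simp only [div_eq_mul_inv, mul_inv, one_mul]
            push_cast
            ring_nf
          rw [hin, hg, ← ENNReal.ofReal_mul (by have := mhn_nonneg m r; positivity)]
          congr 1
          push_cast
          rw [pow_succ]
          simp only [div_eq_mul_inv, mul_inv, one_mul]
          ring
    calc ∑' a : ℕ, ∑' b : ℕ, ENNReal.ofReal
          (mhn b (m+1) * creal (a+1) (b+1) / (((b:ℝ)+1) * ((a:ℝ)+1)^e))
        = ∑' a : ℕ, ∑' r : ℕ, ENNReal.ofReal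
          (mhn r m * creal (a+1) (r+1) / (((r:ℝ)+1) * ((a:ℝ)+1)^(e+1))) := tsum_congr key
      _ = ∑' i : ℕ, ENNReal.ofReal (1 / ((i:ℝ)+1)^(e+1+m+1)) := ih (e+1) (by omega)
      _ = ∑' i : ℕ, ENNReal.ofReal (1 / ((i:ℝ)+1)^(e+(m+1)+1)) := by
          rw [show e + 1 + m + 1 = e + (m+1) + 1 by omega]

/-- Euler's theorem `ζ(2,{1}_q) = ζ(q+2)` in `ℝ≥0∞` form. -/
lemma eulerE (q : ℕ) :
    ∑' b : ℕ, ENNReal.ofReal (mhn b q / ((b:ℝ)+1)^2)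
      = ∑' i : ℕ, ENNReal.ofReal (1 / ((i:ℝ)+1)^(q+2)) := by
  have h1 := eulerAux q 1 le_rfl
  rw [show 1 + q + 1 = q + 2 by omega] at h1
  rw [← h1, ENNReal.tsum_comm]
  refine tsum_congr fun b => ?_
  have hc := (hasSum_creal (b+1) 0 (by omega)).mul_left (mhn b q / ((b:ℝ)+1))
  have h2 : ∑' a : ℕ, ENNReal.ofReal
      (mhn b q * creal (a+1) (b+1) / (((b:ℝ)+1) * ((a:ℝ)+1)^1))
      = ENNReal.ofReal (mhn b q / ((b:ℝ)+1) * (creal (b+1) 0 / ((b+1:ℕ):ℝ))) := by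
    apply ofReal_tsum_hasSum (fun a => by
      have h3 := mhn_nonneg q b
      have h4 := (creal_pos (a+1) (b+1)).le
      positivity)
    convert hc using 2 with a
    on_goal 1 => rfl
    rw [creal_symm]
    push_cast
    simp only [pow_one, div_eq_mul_inv, mul_inv, one_mul]
    ring_nf
  rw [h2, creal_zero]
  congr 1
  push_cast
  simp only [div_eq_mul_inv, mul_inv, one_mul, pow_two]
  try ring

lemma rz_nonneg (p : ℕ) : 0 ≤ rz p := tsum_nonneg fun i => by positivity

lemma summable_zeta (q : ℕ) : Summable (fun i : ℕ => 1 / ((i:ℝ) + 1) ^ (q+2)) := by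
  have := (Real.summable_one_div_nat_pow (p := q+2)).2 (by omega)
  have h2 := (summable_nat_add_iff 1).2 this
  simpa using h2

lemma euler_hasSum (q : ℕ) :
    HasSum (fun b : ℕ => mhn b q / ((b:ℝ)+1)^2) (rz (q+2)) := by
  apply hasSum_of_ennreal (fun b => by have := mhn_nonneg q b; positivity) (rz_nonneg (q+2))
  rw [eulerE q]
  have : rz (q+2) = ∑' i : ℕ, 1 / ((i:ℝ)+1)^(q+2) := rfl
  rw [this]
  exact ofReal_tsum_hasSum (fun i => by positivity) (summable_zeta q).hasSum

lemma lemmaA_hasSum (m k : ℕ) (hk : 1 ≤ k) :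
    HasSum (fun b : ℕ => mhn b m / (((b:ℝ) + 1) * ((b:ℝ) + 1 + k))) (mhsn k (m+1) / k) :=
  hasSum_of_ennreal
    (fun b => div_nonneg (mhn_nonneg m b) (by positivity))
    (by have := mhsn_nonneg (m+1) k; positivity)
    (lemmaA m k hk)

/-- formula (4.6): for `k ≥ 1`, `p ≥ 2`,
`∑_{n=1}^∞ ζ_n({1}_{p-1})/(n(n+k)) = (1/k)(ζ(p) + ζ_k^⋆({1}_p) - ζ_k^⋆({1}_{p-1})/k)`. -/
theorem mhn_series_identity (k p : ℕ) (hk : 1 ≤ k) (hp : 2 ≤ p) :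
    ∑' n : ℕ, mhn (n + 1) (p - 1) / ((n + 1 : ℝ) * ((n + 1 : ℝ) + k)) =
      (1 / (k : ℝ)) * (rz p + mhsn k p - mhsn k (p - 1) / (k : ℝ)) := by
  obtain ⟨q, rfl⟩ : ∃ q, p = q + 2 := ⟨p - 2, by omega⟩
  rw [show q + 2 - 1 = q + 1 by omega]
  have hk0 : (k:ℝ) ≠ 0 := Nat.cast_ne_zero.2 (by omega)
  have hkpos : (0:ℝ) < (k:ℝ) := by positivity
  have hu := lemmaA_hasSum (q+1) k hk
  have hw2 := lemmaA_hasSum q k hk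
  have hw1 := euler_hasSum q
  have hv := (hw1.mul_left (1/(k:ℝ))).sub (hw2.mul_left (1/(k:ℝ)))
  have ht := hu.add hv
  have hpt : ∀ n : ℕ,
      mhn (n + 1) (q + 1) / ((n + 1 : ℝ) * ((n + 1 : ℝ) + k))
        = mhn n (q+1) / (((n:ℝ) + 1) * ((n:ℝ) + 1 + k)) +
          ((1/(k:ℝ)) * (mhn n q / ((n:ℝ)+1)^2)
            - (1/(k:ℝ)) * (mhn n q / (((n:ℝ) + 1) * ((n:ℝ) + 1 + k)))) := by
    intro n
    have hsplit : mhn (n+1) (q+1) = mhn n (q+1) + mhn n q / ((n:ℝ)+1) := by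
      rw [mhn_succ, Finset.sum_range_succ, ← mhn_succ]
    rw [hsplit]
    have d1 : ((n:ℝ) + 1) ≠ 0 := by positivity
    have d2 : ((n:ℝ) + 1 + k) ≠ 0 := by positivity
    push_cast
    field_simp
    ring
  rw [tsum_congr hpt, ht.tsum_eq]
  field_simp
  ring
end

section
/- For integers r ≥ 0, m ≥ 1, n ≥ 1 and real p > 0, Σ_{1 ≤ k_m ≤ ⋯ ≤ k_1 ≤ n} 1/((k_1 + r)^p (k_2 + r)^p ⋯ (k_m + r)^p) = Σ_{i+j=m, i,j ≥ 0} (−1)^i · ζ_r({p}_i) · ζ_{n+r}^⋆({p}_j). -/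
open Finset

lemma mhnP_zero_succ (p : ℝ) (m : ℕ) : mhnP p 0 (m+1) = 0 := by simp [mhnP]
lemma mhsnP_zero_succ (p : ℝ) (m : ℕ) : mhsnP p 0 (m+1) = 0 := by simp [mhsnP]

lemma mhnP_succ_succ (p : ℝ) (N m : ℕ) :
    mhnP p (N+1) (m+1) = mhnP p N (m+1) + mhnP p N m / ((N:ℝ)+1) ^ p := by
  simp only [mhnP]
  rw [Finset.sum_Icc_succ_top (by omega : 1 ≤ N + 1)]
  push_cast
  simp

lemma mhsnP_succ_succ (p : ℝ) (N m : ℕ) :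
    mhsnP p (N+1) (m+1) = mhsnP p N (m+1) + mhsnP p (N+1) m / ((N:ℝ)+1) ^ p := by
  simp only [mhsnP]
  rw [Finset.sum_Icc_succ_top (by omega : 1 ≤ N + 1)]
  push_cast
  simp

lemma orth (p : ℝ) (N : ℕ) : ∀ m : ℕ,
    ∑ i ∈ Finset.range (m+1), (-1:ℝ)^i * mhnP p N i * mhsnP p N (m-i)
      = if m = 0 then 1 else 0 := by
  induction N with
  | zero =>
    intro m
    cases m with
    | zero => simp [mhnP, mhsnP]
    | succ m =>
      rw [if_neg (Nat.succ_ne_zero m)]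
      apply Finset.sum_eq_zero
      intro i hi
      cases i with
      | zero => simp [mhsnP_zero_succ]
      | succ i => simp [mhnP_zero_succ]
  | succ N ih =>
    set c : ℝ := ((N:ℝ)+1) ^ p with hc
    set F : ℕ → ℝ := fun m =>
      ∑ i ∈ Finset.range (m+1), (-1:ℝ)^i * mhnP p N i * mhsnP p (N+1) (m-i) with hF
    have hFm : ∀ m : ℕ, F m
        = ∑ i ∈ Finset.range (m+1), (-1:ℝ)^i * mhnP p N i * mhsnP p (N+1) (m-i) :=
      fun m => rfl
    have claim2 : ∀ m : ℕ, F (m+1) = F m / c := by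
      intro m
      have h2 : ∀ i ∈ Finset.range (m+1),
          (-1:ℝ)^i * mhnP p N i * mhsnP p (N+1) (m+1-i)
            = (-1:ℝ)^i * mhnP p N i * mhsnP p N (m+1-i)
              + (-1:ℝ)^i * mhnP p N i * mhsnP p (N+1) (m-i) / c := by
        intro i hi
        have hi' : i ≤ m := Nat.lt_succ_iff.mp (Finset.mem_range.mp hi)
        have h1 : m + 1 - i = (m - i) + 1 := by omega
        have hc0 : c ≠ 0 := by rw [hc]; positivity
        rw [h1, mhsnP_succ_succ, ← hc]
        field_simp
      have e1 : F (m+1)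
          = (∑ i ∈ Finset.range (m+1+1), (-1:ℝ)^i * mhnP p N i * mhsnP p N (m+1-i))
            + F m / c := by
        rw [hFm (m+1), hFm m]
        rw [Finset.sum_range_succ, Finset.sum_range_succ
          (f := fun i => (-1:ℝ)^i * mhnP p N i * mhsnP p N (m+1-i))]
        rw [Finset.sum_congr rfl h2, Finset.sum_add_distrib, ← Finset.sum_div]
        simp [mhsnP]
        ring
      rw [e1, ih (m+1), if_neg (Nat.succ_ne_zero m), zero_add]
    have claim1 : ∀ m : ℕ,
        (∑ i ∈ Finset.range (m+1+1), (-1:ℝ)^i * mhnP p (N+1) i * mhsnP p (N+1) (m+1-i))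
          = F (m+1) - F m / c := by
      intro m
      rw [Finset.sum_range_succ']
      have hFs : F (m+1) = (∑ i ∈ Finset.range (m+1),
          (-1:ℝ)^(i+1) * mhnP p N (i+1) * mhsnP p (N+1) (m-i)) + mhsnP p (N+1) (m+1) := by
        rw [hFm (m+1)]
        rw [Finset.sum_range_succ']
        simp [mhnP, Nat.succ_sub_succ]
      have h2 : ∀ i ∈ Finset.range (m+1),
          (-1:ℝ)^(i+1) * mhnP p (N+1) (i+1) * mhsnP p (N+1) (m+1-(i+1))
            = (-1:ℝ)^(i+1) * mhnP p N (i+1) * mhsnP p (N+1) (m-i)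
              - (-1:ℝ)^i * mhnP p N i * mhsnP p (N+1) (m-i) / c := by
        intro i hi
        have hc0 : c ≠ 0 := by rw [hc]; positivity
        rw [Nat.succ_sub_succ, mhnP_succ_succ, ← hc]
        field_simp
        ring
      rw [Finset.sum_congr rfl h2, Finset.sum_sub_distrib, ← Finset.sum_div]
      rw [hFs, hFm m]
      simp [mhnP]
      ring
    intro m
    cases m with
    | zero => simp [mhnP, mhsnP]
    | succ m =>
      rw [claim1 m, claim2 m, if_neg (Nat.succ_ne_zero m), sub_self]

lemma mhsnP_split (p : ℝ) (r : ℕ) : ∀ j n : ℕ,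
    mhsnP p (n + r) j =
      ∑ t ∈ Finset.range (j+1),
        wdSum (fun k => 1 / ((k : ℝ) + r) ^ p) n t * mhsnP p r (j - t) := by
  intro j
  induction j with
  | zero => intro n; simp [mhsnP, wdSum]
  | succ j ih =>
    intro n
    set a : ℕ → ℝ := fun k => 1 / ((k : ℝ) + r) ^ p with ha
    have key : mhsnP p (n+r) (j+1)
        = mhsnP p r (j+1) + ∑ k ∈ Finset.Icc 1 n, a k * mhsnP p (k + r) j := by
      show (∑ k ∈ Finset.Icc 1 (n+r), mhsnP p k j / (k:ℝ)^p) = _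
      have hs : mhsnP p r (j+1) = ∑ k ∈ Finset.Icc 1 r, mhsnP p k j / (k:ℝ)^p := rfl
      have hI : ∀ b : ℕ, Finset.Icc 1 b = Finset.Ioc 0 b := fun b => Finset.Icc_add_one_left_eq_Ioc 0 b
      rw [hs, hI, hI,
        ← Finset.sum_Ioc_consecutive (fun k => mhsnP p k j / (k:ℝ)^p)
          (Nat.zero_le r) (Nat.le_add_left r n)]
      congr 1
      have hmap : Finset.Ioc r (n + r) =
          (Finset.Ioc 0 n).map (addLeftEmbedding r) := by
        rw [Finset.map_add_left_Ioc]
        simp [Nat.add_comm]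
      rw [hmap, Finset.sum_map, ← hI]
      apply Finset.sum_congr rfl
      intro k hk
      simp only [addLeftEmbedding_apply, ha]
      rw [Nat.add_comm r k]
      push_cast
      rw [one_div, div_eq_inv_mul]
    rw [key]
    have e2 : ∑ k ∈ Finset.Icc 1 n, a k * mhsnP p (k + r) j
        = ∑ t ∈ Finset.range (j+1), wdSum a n (t+1) * mhsnP p r (j - t) := by
      have : ∀ k ∈ Finset.Icc 1 n, a k * mhsnP p (k + r) j
          = ∑ t ∈ Finset.range (j+1), a k * wdSum a k t * mhsnP p r (j - t) := by
        intro k hk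
        rw [ih k, Finset.mul_sum]
        exact Finset.sum_congr rfl fun t ht => by ring
      rw [Finset.sum_congr rfl this, Finset.sum_comm]
      apply Finset.sum_congr rfl
      intro t ht
      have : wdSum a n (t+1) = ∑ k ∈ Finset.Icc 1 n, a k * wdSum a k t := rfl
      rw [this, Finset.sum_mul]
    rw [e2, Finset.sum_range_succ'
      (f := fun t => wdSum a n t * mhsnP p r (j + 1 - t))]
    simp only [Nat.succ_sub_succ, Nat.sub_zero]
    have : wdSum a n 0 = 1 := rfl
    rw [this, one_mul, add_comm]

/-- Theorem 2.7, star version: for `r ≥ 0`, `m, n ≥ 1` and real `p > 0`,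
`∑_{1 ≤ k_m ≤ ⋯ ≤ k₁ ≤ n} 1/((k₁+r)^p ⋯ (k_m+r)^p) = ∑_{i+j=m} (-1)^i ζ_r({p}_i) ζ_{n+r}^⋆({p}_j)`. -/
theorem shifted_mhsnP_eq (r m n : ℕ) (p : ℝ) (hm : 1 ≤ m) (hn : 1 ≤ n) (hp : 0 < p) :
    wdSum (fun k => 1 / ((k : ℝ) + r) ^ p) n m =
      ∑ i ∈ Finset.range (m + 1), (-1 : ℝ) ^ i * mhnP p r i * mhsnP p (n + r) (m - i) := by
  set a : ℕ → ℝ := fun k => 1 / ((k : ℝ) + r) ^ p with ha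
  symm
  have step1 : ∀ i ∈ Finset.range (m+1),
      (-1:ℝ)^i * mhnP p r i * mhsnP p (n+r) (m-i)
        = ∑ t ∈ Finset.range (m+1-i),
            (-1:ℝ)^i * mhnP p r i * (wdSum a n t * mhsnP p r (m-i-t)) := by
    intro i hi
    have hi' : i ≤ m := Nat.lt_succ_iff.mp (Finset.mem_range.mp hi)
    rw [mhsnP_split p r (m-i) n, Finset.mul_sum]
    have : m - i + 1 = m + 1 - i := by omega
    rw [this]
  rw [Finset.sum_congr rfl step1]
  rw [Finset.sum_comm' (t' := Finset.range (m+1))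
    (s' := fun t => Finset.range (m+1-t))
    (fun i t => by simp only [Finset.mem_range]; omega)]
  have step2 : ∀ t ∈ Finset.range (m+1),
      (∑ i ∈ Finset.range (m+1-t),
        (-1:ℝ)^i * mhnP p r i * (wdSum a n t * mhsnP p r (m-i-t)))
        = wdSum a n t * (if m - t = 0 then (1:ℝ) else 0) := by
    intro t ht
    have ht' : t ≤ m := Nat.lt_succ_iff.mp (Finset.mem_range.mp ht)
    have h1 : m + 1 - t = (m - t) + 1 := by omega
    rw [h1, ← orth p r (m - t), Finset.mul_sum]
    apply Finset.sum_congr rfl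
    intro i hi
    have : m - i - t = m - t - i := by omega
    rw [this]; ring
  rw [Finset.sum_congr rfl step2]
  rw [Finset.sum_eq_single m]
  · simp
  · intro t ht htm
    have : m - t ≠ 0 := by
      have := Finset.mem_range.mp ht; omega
    rw [if_neg this, mul_zero]
  · intro h
    exact absurd (Finset.self_mem_range_succ m) h
end

section
/- Let r ≥ 0, m ≥ 1, n ≥ 1 be integers and let a_1, a_2, … be complex numbers. Then Σ_{1 ≤ k_m < ⋯ < k_1 ≤ n} a_{k_1+r} a_{k_2+r} ⋯ a_{k_m+r} = Σ_{i+j=m, i,j ≥ 0} (−1)^i · A_i(r) · Ā_j(n+r), where Ā_q(N) = Σ_{1 ≤ k_q < ⋯ < k_1 ≤ N} a_{k_1}⋯a_{k_q} and A_q(N) = Σ_{1 ≤ k_q ≤ ⋯ ≤ k_1 ≤ N} a_{k_1}⋯a_{k_q}. -/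
open Finset

lemma sdSum_zero (a : ℕ → ℂ) (n : ℕ) : sdSum a n 0 = 1 := rfl

lemma sdSum_nil (a : ℕ → ℂ) (q : ℕ) : sdSum a 0 (q + 1) = 0 := by simp [sdSum]

lemma wdSum_nil (a : ℕ → ℂ) (q : ℕ) : wdSum a 0 (q + 1) = 0 := by simp [wdSum]

lemma sdSum_succ_top (a : ℕ → ℂ) (n q : ℕ) :
    sdSum a (n + 1) (q + 1) = sdSum a n (q + 1) + a (n + 1) * sdSum a n q := by
  rw [show sdSum a (n+1) (q+1) = ∑ k ∈ Finset.Icc 1 (n+1), a k * sdSum a (k-1) q from rfl,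
    Finset.sum_Icc_succ_top (by omega : 1 ≤ n + 1)]
  simp [sdSum]

lemma wdSum_succ_top (a : ℕ → ℂ) (n q : ℕ) :
    wdSum a (n + 1) (q + 1) = wdSum a n (q + 1) + a (n + 1) * wdSum a (n + 1) q := by
  rw [show wdSum a (n+1) (q+1) = ∑ k ∈ Finset.Icc 1 (n+1), a k * wdSum a k q from rfl,
    Finset.sum_Icc_succ_top (by omega : 1 ≤ n + 1)]
  simp [wdSum]

lemma delta_step (a : ℕ → ℂ) (r : ℕ)
    (H : ∀ m, (∑ i ∈ Finset.range (m + 1),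
        (-1 : ℂ) ^ i * wdSum a r i * sdSum a r (m - i)) = if m = 0 then 1 else 0) :
    ∀ m, (∑ i ∈ Finset.range (m + 1),
        (-1 : ℂ) ^ i * wdSum a (r + 1) i * sdSum a (r + 1) (m - i)) = if m = 0 then 1 else 0 := by
  intro m
  induction m with
  | zero => simp [sdSum_zero, wdSum]
  | succ M ih =>
    have key : (∑ i ∈ Finset.range (M + 1 + 1),
        (-1 : ℂ) ^ i * wdSum a (r + 1) i * sdSum a (r + 1) (M + 1 - i))
        = (∑ i ∈ Finset.range (M + 1 + 1),
            (-1 : ℂ) ^ i * wdSum a r i * sdSum a (r + 1) (M + 1 - i))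
          - a (r + 1) * (∑ i ∈ Finset.range (M + 1),
              (-1 : ℂ) ^ i * wdSum a (r + 1) i * sdSum a (r + 1) (M - i)) := by
      rw [Finset.sum_range_succ' (fun i => (-1 : ℂ) ^ i * wdSum a (r + 1) i * sdSum a (r + 1) (M + 1 - i)),
        Finset.sum_range_succ' (fun i => (-1 : ℂ) ^ i * wdSum a r i * sdSum a (r + 1) (M + 1 - i))]
      have h0 : wdSum a (r+1) 0 = (1:ℂ) := rfl
      have h0' : wdSum a r 0 = (1:ℂ) := rfl
      have : ∀ i ∈ Finset.range (M + 1),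
          (-1 : ℂ) ^ (i+1) * wdSum a (r + 1) (i+1) * sdSum a (r + 1) (M + 1 - (i+1))
          = (-1 : ℂ) ^ (i+1) * wdSum a r (i+1) * sdSum a (r + 1) (M + 1 - (i+1))
            - a (r + 1) * ((-1 : ℂ) ^ i * wdSum a (r + 1) i * sdSum a (r + 1) (M - i)) := by
        intro i hi
        rw [wdSum_succ_top]
        have : M + 1 - (i + 1) = M - i := by omega
        rw [this]
        ring
      rw [Finset.sum_congr rfl this, Finset.sum_sub_distrib, Finset.mul_sum, h0, h0']
      ring
    have key2 : (∑ i ∈ Finset.range (M + 1 + 1),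
        (-1 : ℂ) ^ i * wdSum a r i * sdSum a (r + 1) (M + 1 - i))
        = (∑ i ∈ Finset.range (M + 1 + 1),
            (-1 : ℂ) ^ i * wdSum a r i * sdSum a r (M + 1 - i))
          + a (r + 1) * (∑ i ∈ Finset.range (M + 1),
              (-1 : ℂ) ^ i * wdSum a r i * sdSum a r (M - i)) := by
      rw [Finset.sum_range_succ (fun i => (-1 : ℂ) ^ i * wdSum a r i * sdSum a (r + 1) (M + 1 - i)),
        Finset.sum_range_succ (fun i => (-1 : ℂ) ^ i * wdSum a r i * sdSum a r (M + 1 - i))]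
      have : ∀ i ∈ Finset.range (M + 1),
          (-1 : ℂ) ^ i * wdSum a r i * sdSum a (r + 1) (M + 1 - i)
          = (-1 : ℂ) ^ i * wdSum a r i * sdSum a r (M + 1 - i)
            + a (r + 1) * ((-1 : ℂ) ^ i * wdSum a r i * sdSum a r (M - i)) := by
        intro i hi
        simp only [Finset.mem_range] at hi
        have h1 : M + 1 - i = (M - i) + 1 := by omega
        rw [h1, sdSum_succ_top]
        ring
      rw [Finset.sum_congr rfl this, Finset.sum_add_distrib, Finset.mul_sum]
      simp only [Nat.sub_self, sdSum_zero]
      ring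
    rw [key, key2, ih, H (M + 1), H M]
    simp

lemma delta_id (a : ℕ → ℂ) : ∀ r m, (∑ i ∈ Finset.range (m + 1),
    (-1 : ℂ) ^ i * wdSum a r i * sdSum a r (m - i)) = if m = 0 then 1 else 0 := by
  intro r
  induction r with
  | zero =>
    intro m
    match m with
    | 0 => simp [sdSum_zero, wdSum]
    | M + 1 =>
      rw [if_neg (by omega)]
      apply Finset.sum_eq_zero
      intro i hi
      match i with
      | 0 => simp [wdSum, sdSum_nil]
      | i + 1 => simp [wdSum_nil]
  | succ r ih => exact delta_step a r ih

lemma main_id (a : ℕ → ℂ) (r : ℕ) : ∀ n m, sdSum (fun k => a (k + r)) n m =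
    ∑ i ∈ Finset.range (m + 1), (-1 : ℂ) ^ i * wdSum a r i * sdSum a (n + r) (m - i) := by
  intro n
  induction n with
  | zero =>
    intro m
    rw [show (0 + r) = r from by omega, delta_id a r m]
    match m with
    | 0 => simp [sdSum_zero]
    | M + 1 => simp [sdSum_nil]
  | succ n ih =>
    intro m
    match m with
    | 0 => simp [sdSum_zero, wdSum]
    | M + 1 =>
      rw [sdSum_succ_top, ih (M + 1), ih M]
      rw [show (n + 1 + r) = (n + r) + 1 from by omega]
      rw [Finset.sum_range_succ (fun i => (-1 : ℂ) ^ i * wdSum a r i * sdSum a ((n+r)+1) (M + 1 - i)),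
        Finset.sum_range_succ (fun i => (-1 : ℂ) ^ i * wdSum a r i * sdSum a (n+r) (M + 1 - i))]
      have : ∀ i ∈ Finset.range (M + 1),
          (-1 : ℂ) ^ i * wdSum a r i * sdSum a ((n+r)+1) (M + 1 - i)
          = (-1 : ℂ) ^ i * wdSum a r i * sdSum a (n+r) (M + 1 - i)
            + a ((n+r)+1) * ((-1 : ℂ) ^ i * wdSum a r i * sdSum a (n+r) (M - i)) := by
        intro i hi
        simp only [Finset.mem_range] at hi
        have h1 : M + 1 - i = (M - i) + 1 := by omega
        rw [h1, sdSum_succ_top]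
        ring
      rw [Finset.sum_congr rfl this, Finset.sum_add_distrib, Finset.mul_sum]
      simp only [Nat.sub_self, sdSum_zero]
      ring

/-- Remark 2.1, strict version: for `r ≥ 0`, `m, n ≥ 1`,
`∑_{1 ≤ k_m < ⋯ < k₁ ≤ n} a_{k₁+r}⋯a_{k_m+r} = ∑_{i+j=m} (-1)^i A_i(r) Ā_j(n+r)`. -/
theorem shifted_sdSum_eq (r m n : ℕ) (hm : 1 ≤ m) (hn : 1 ≤ n) (a : ℕ → ℂ) :
    sdSum (fun k => a (k + r)) n m =
      ∑ i ∈ Finset.range (m + 1), (-1 : ℂ) ^ i * wdSum a r i * sdSum a (n + r) (m - i) :=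
  main_id a r n m
end

section
/- For integers r ≥ 0, m ≥ 1 and n ≥ 1, the shifted multiple harmonic number ζ_n({1}_m | r+1) = Σ_{1 ≤ k_m < ⋯ < k_1 ≤ n} 1/((k_1+r)⋯(k_m+r)) satisfies the recurrence ζ_n({1}_m | r+1) = ((−1)^{m−1}/m) · Σ_{i=0}^{m−1} (−1)^i · ζ_n({1}_i | r+1) · ( H_{n+r}^{(m−i)} − H_r^{(m−i)} ), where ζ_n({1}_0 | r+1) = 1. -/
open Finset

lemma sdSum_eq_esymm (a : ℕ → ℝ) (n q : ℕ) :
    sdSum a n q = ∑ t ∈ Finset.powersetCard q (Finset.Icc 1 n), ∏ k ∈ t, a k := by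
  induction n generalizing q with
  | zero =>
    cases q with
    | zero => simp [sdSum]
    | succ q =>
      have : Finset.Icc 1 0 = (∅ : Finset ℕ) := by simp
      have h0 : Finset.powersetCard (q+1) (∅:Finset ℕ) = ∅ :=
        Finset.powersetCard_eq_empty.mpr (by simp)
      simp [sdSum, this, h0]
  | succ n ih =>
    cases q with
    | zero => simp [sdSum]
    | succ q =>
      have hstep : sdSum a (n + 1) (q + 1) = sdSum a n (q + 1) + a (n + 1) * sdSum a n q := by
        show (∑ k ∈ Finset.Icc 1 (n+1), a k * sdSum a (k - 1) q) = _
        rw [Finset.sum_Icc_succ_top (by omega)]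
        simp [sdSum]
      rw [hstep, ih, ih]
      have hnot : (n + 1) ∉ Finset.Icc 1 n := by simp
      have hins : Finset.Icc 1 (n+1) = insert (n+1) (Finset.Icc 1 n) := by
        ext x; simp only [Finset.mem_Icc, Finset.mem_insert]; omega
      rw [hins, Finset.powersetCard_succ_insert hnot]
      rw [Finset.sum_union, Finset.sum_image]
      · congr 1
        rw [Finset.mul_sum]
        refine Finset.sum_congr rfl fun t ht => ?_
        rw [Finset.prod_insert]
        intro h
        exact hnot ((Finset.mem_powersetCard.mp ht).1 h)
      · intro t ht s hs hts
        have h1 : (n+1) ∉ t := fun h => hnot ((Finset.mem_powersetCard.mp ht).1 h)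
        have h2 : (n+1) ∉ s := fun h => hnot ((Finset.mem_powersetCard.mp hs).1 h)
        rw [← Finset.erase_insert h1, ← Finset.erase_insert h2, hts]
      · rw [Finset.disjoint_left]
        intro t ht hti
        obtain ⟨s, hs, rfl⟩ := Finset.mem_image.mp hti
        exact hnot ((Finset.mem_powersetCard.mp ht).1 (Finset.mem_insert_self _ _))

open MvPolynomial in
lemma newton_eval (a : ℕ → ℝ) (n m : ℕ) :
    (m : ℝ) * sdSum a n m = (-1 : ℝ)^(m+1) *
      ∑ p ∈ (Finset.HasAntidiagonal.antidiagonal m).filter (fun p => p.1 < m),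
        (-1 : ℝ)^p.1 * sdSum a n p.1 * (∑ k ∈ Finset.Icc 1 n, a k ^ p.2) := by
  classical
  set f : Fin n → ℝ := fun i => a (i.1 + 1) with hf
  set e : Fin n ↪ ℕ := ⟨fun i => (i : ℕ) + 1, fun i j h => Fin.ext (by simpa using h)⟩ with he
  have huniv : (Finset.univ : Finset (Fin n)).map e = Finset.Icc 1 n := by
    ext x
    simp only [Finset.mem_map, Finset.mem_univ, true_and, Finset.mem_Icc, he,
      Function.Embedding.coeFn_mk]
    constructor
    · rintro ⟨i, rfl⟩; exact ⟨by show 1 ≤ (i : ℕ) + 1; omega, by have := i.2; show (i : ℕ) + 1 ≤ n; omega⟩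
    · rintro ⟨h1, h2⟩; exact ⟨⟨x - 1, by omega⟩, by show x - 1 + 1 = x; omega⟩
  have Hesymm : ∀ q, (aeval f) (esymm (Fin n) ℝ q) = sdSum a n q := by
    intro q
    rw [esymm, map_sum, sdSum_eq_esymm, ← huniv, Finset.powersetCard_map, Finset.sum_map]
    refine Finset.sum_congr rfl fun t _ => ?_
    rw [show (Finset.mapEmbedding e).toEmbedding t = t.map e from rfl,
      Finset.prod_map, map_prod]
    exact Finset.prod_congr rfl fun i _ => by simp [he, hf]; rfl
  have Hpsum : ∀ j, (aeval f) (psum (Fin n) ℝ j) = ∑ k ∈ Finset.Icc 1 n, a k ^ j := by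
    intro j
    rw [psum, map_sum, ← huniv, Finset.sum_map]
    refine Finset.sum_congr rfl fun i _ => ?_
    rw [map_pow, aeval_X]
    simp [he, hf]; rfl
  have h := congrArg (aeval f) (MvPolynomial.mul_esymm_eq_sum (Fin n) ℝ m)
  simpa only [map_mul, map_sum, map_pow, map_neg, map_one, map_natCast, Hesymm, Hpsum] using h

lemma genH_sub (p n r : ℕ) :
    genH p (n + r) - genH p r = ∑ k ∈ Finset.Icc 1 n, (1 / ((k : ℝ) + r)) ^ p := by
  have hI : ∀ N, Finset.Icc 1 N = Finset.Ioc 0 N := fun N => by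
    ext x; simp only [Finset.mem_Icc, Finset.mem_Ioc]; omega
  have hc : genH p r + (∑ j ∈ Finset.Ioc r (r + n), 1 / (j : ℝ) ^ p) = genH p (n + r) := by
    unfold genH
    rw [hI, hI, show n + r = r + n from by omega]
    exact Finset.sum_Ioc_consecutive _ (by omega) (by omega)
  have hmap : Finset.Ioc r (r + n) = (Finset.Ioc 0 n).map (addLeftEmbedding r) := by
    rw [Finset.map_add_left_Ioc]; norm_num
  rw [← hc, add_sub_cancel_left, hmap, Finset.sum_map, hI]
  refine Finset.sum_congr rfl fun k hk => ?_
  simp only [addLeftEmbedding_apply]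
  push_cast
  rw [div_pow, one_pow, add_comm]

/-- formula (2.15): the shifted multiple harmonic number
`ζ_n({1}_m | r+1) = ∑_{1 ≤ k_m < ⋯ < k₁ ≤ n} 1/((k₁+r)⋯(k_m+r))` satisfies
`ζ_n({1}_m | r+1) = ((-1)^{m-1}/m) ∑_{i=0}^{m-1} (-1)^i ζ_n({1}_i | r+1) (H_{n+r}^{(m-i)} - H_r^{(m-i)})`. -/
theorem shifted_mhn_recurrence (r m n : ℕ) (hm : 1 ≤ m) (hn : 1 ≤ n) :
    sdSum (fun k => 1 / ((k : ℝ) + r)) n m =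
      ((-1 : ℝ) ^ (m - 1) / (m : ℝ)) *
        ∑ i ∈ Finset.range m,
          (-1 : ℝ) ^ i * sdSum (fun k => 1 / ((k : ℝ) + r)) n i *
            (genH (m - i) (n + r) - genH (m - i) r) := by
  set a : ℕ → ℝ := fun k => 1 / ((k : ℝ) + r) with ha
  have hN := newton_eval a n m
  set g : ℕ → ℕ → ℝ := fun i j => (-1 : ℝ) ^ i * sdSum a n i * (∑ k ∈ Finset.Icc 1 n, a k ^ j)
    with hg
  have hconv : (∑ p ∈ (Finset.HasAntidiagonal.antidiagonal m).filter (fun p => p.1 < m), g p.1 p.2)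
      = ∑ i ∈ Finset.range m, g i (m - i) := by
    rw [Finset.sum_filter, Finset.Nat.sum_antidiagonal_eq_sum_range_succ
      (fun i j => if i < m then g i j else 0), Finset.sum_range_succ, if_neg (lt_irrefl m),
      add_zero]
    exact Finset.sum_congr rfl fun i hi => if_pos (Finset.mem_range.mp hi)
  rw [hconv] at hN
  have hterm : ∀ i, g i (m - i) = (-1 : ℝ) ^ i * sdSum a n i *
      (genH (m - i) (n + r) - genH (m - i) r) := by
    intro i
    rw [hg]
    simp only [genH_sub (m - i) n r]; rfl
  have hS : (∑ i ∈ Finset.range m, g i (m - i)) =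
      ∑ i ∈ Finset.range m, (-1 : ℝ) ^ i * sdSum a n i *
        (genH (m - i) (n + r) - genH (m - i) r) :=
    Finset.sum_congr rfl fun i _ => hterm i
  rw [hS] at hN
  have hm' : (m : ℝ) ≠ 0 := Nat.cast_ne_zero.mpr (by omega)
  have hpow : (-1 : ℝ) ^ (m + 1) = (-1 : ℝ) ^ (m - 1) := by
    obtain ⟨m', rfl⟩ : ∃ m', m = m' + 1 := ⟨m - 1, by omega⟩
    simp [pow_succ, pow_add]
  rw [hpow] at hN
  rw [div_mul_eq_mul_div, eq_div_iff hm']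
  linear_combination hN
end

section
/- For integers r ≥ 0, k ≥ 1 and n ≥ 1, the generalized hyperharmonic number admits the explicit formula h_n^{(r+1)}(k) = (1/r!) · Σ_{l=1}^{r+1} [r+1; l] · n^{l−1} · Σ_{i+j=k, i,j ≥ 0} (−1)^i · ζ_r^⋆({1}_i) · ζ_{n+r}({1}_j). -/
open Finset

noncomputable def ee (r : ℕ) : ℕ → ℕ → ℝ
  | _, 0 => 1
  | n, k + 1 => ∑ j ∈ Finset.Icc 1 n, (1 / ((r : ℝ) + (j : ℝ))) * ee r (j - 1) k

lemma ee_zero (r n : ℕ) : ee r n 0 = 1 := rfl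

lemma ee_nil (r k : ℕ) : ee r 0 (k + 1) = 0 := by simp [ee]

lemma ee_succ (r n k : ℕ) : ee r (n + 1) (k + 1) =
    ee r n (k + 1) + (1 / ((r : ℝ) + (n + 1 : ℕ))) * ee r n k := by
  show (∑ j ∈ Finset.Icc 1 (n+1), (1 / ((r : ℝ) + (j:ℝ))) * ee r (j - 1) k) = _
  rw [Finset.sum_Icc_succ_top (by omega)]
  simp [ee]

lemma ee_shift (r n : ℕ) : ∀ k, ee r (n + 1) (k + 1) =
    ee (r + 1) n (k + 1) + (1 / ((r : ℝ) + 1)) * ee (r + 1) n k := by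
  induction n with
  | zero =>
    intro k
    cases k with
    | zero => simp [ee]
    | succ k' => simp [ee, ee_nil]
  | succ n ih =>
    intro k
    rw [ee_succ, ih, ee_succ]
    cases k with
    | zero =>
      simp only [ee_zero]
      push_cast
      ring
    | succ k' =>
      rw [ih k', ee_succ (r+1) n k']
      push_cast
      ring

lemma mhn_eq_ee : ∀ k n, mhn n k = ee 0 n k := by
  intro k
  induction k with
  | zero => intro n; rfl
  | succ k ih =>
    intro n
    show (∑ j ∈ Finset.Icc 1 n, mhn (j-1) k / (j:ℝ)) = ∑ j ∈ Finset.Icc 1 n, (1 / ((0:ℕ) + (j:ℝ))) * ee 0 (j - 1) k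
    refine Finset.sum_congr rfl fun j hj => ?_
    rw [ih]
    push_cast
    ring

lemma mhsn_succ_s16 (N m : ℕ) : mhsn (N + 1) (m + 1) =
    mhsn N (m + 1) + mhsn (N + 1) m / ((N : ℝ) + 1) := by
  show (∑ j ∈ Finset.Icc 1 (N+1), mhsn j m / (j:ℝ)) = _
  rw [Finset.sum_Icc_succ_top (by omega)]
  push_cast
  rfl

lemma mhsn_zero_s16 (m : ℕ) : mhsn 0 (m + 1) = 0 := by simp [mhsn]

noncomputable def ff (r N k : ℕ) : ℝ :=
  ∑ i ∈ Finset.range (k + 1), (-1 : ℝ) ^ i * mhsn r i * mhn N (k - i)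

lemma ff_zero (r N : ℕ) : ff r N 0 = 1 := by simp [ff, mhsn, mhn]

lemma ff_base (N k : ℕ) : ff 0 N k = mhn N k := by
  rw [ff, Finset.sum_eq_single 0]
  · simp [mhsn]
  · intro i _ hi
    obtain ⟨i', rfl⟩ := Nat.exists_eq_succ_of_ne_zero hi
    simp [mhsn_zero_s16]
  · simp

lemma ff_rec (r N k : ℕ) : ff (r + 1) N (k + 1) =
    ff r N (k + 1) - (1 / ((r : ℝ) + 1)) * ff (r + 1) N k := by
  have h : ∀ i ∈ Finset.range (k + 2), (-1 : ℝ) ^ i * mhsn (r+1) i * mhn N (k + 1 - i)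
      = (-1 : ℝ) ^ i * mhsn r i * mhn N (k + 1 - i)
        + (if i = 0 then 0 else (-1 : ℝ) ^ i * (mhsn (r+1) (i-1) / ((r:ℝ)+1)) * mhn N (k + 1 - i)) := by
    intro i _
    cases i with
    | zero => simp [mhsn]
    | succ i' =>
      rw [mhsn_succ_s16]
      simp
      push_cast
      ring
  rw [ff, Finset.sum_congr rfl h, Finset.sum_add_distrib]
  have h2 : (∑ i ∈ Finset.range (k + 2), (if i = 0 then 0 else (-1 : ℝ) ^ i * (mhsn (r+1) (i-1) / ((r:ℝ)+1)) * mhn N (k + 1 - i)))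
      = - (1 / ((r : ℝ) + 1)) * ff (r + 1) N k := by
    rw [Finset.sum_range_succ']
    simp only [Nat.succ_ne_zero, if_false, if_true, eq_self_iff_true, Nat.add_sub_cancel, add_zero, ff]
    rw [Finset.mul_sum]
    refine Finset.sum_congr rfl fun i hi => ?_
    have : k + 1 - (i + 1) = k - i := by omega
    rw [this, pow_succ]
    ring
  rw [h2, ← ff]
  ring

lemma ff_eq_ee : ∀ r n k, ff r (n + r) k = ee r n k := by
  intro r
  induction r with
  | zero => intro n k; rw [Nat.add_zero, ff_base, mhn_eq_ee]
  | succ r ih =>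
    intro n k
    induction k with
    | zero => rw [ff_zero, ee_zero]
    | succ k ihk =>
      have hN : n + (r + 1) = (n + 1) + r := by omega
      rw [ff_rec, hN, ih (n + 1) (k + 1), ← hN, ihk, ee_shift]
      push_cast
      ring

lemma key (c1 c2 c3 a b A B : ℝ) (ha : a ≠ 0) (hb : b ≠ 0)
    (h1 : c1 + c2 = c3) (h2 : b * c2 = a * c3) :
    c1 * A + c2 * (A + 1 / a * B) = c3 * (A + 1 / b * B) := by
  have h3 : c2 * (1 / a) = c3 * (1 / b) := by
    rw [mul_one_div, mul_one_div, div_eq_div_iff ha hb]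
    linear_combination h2
  linear_combination A * h1 + B * h3

lemma hypAux_eq : ∀ r n k, hypAux r n (k + 1) = (Nat.choose (n + r) r : ℝ) * ee r n (k + 1) := by
  intro r
  induction r with
  | zero =>
    intro n k
    show mhn n (k+1) = _
    rw [mhn_eq_ee]
    simp
  | succ r ih =>
    intro n k
    show (∑ j ∈ Finset.Icc 1 n, hypAux r j (k+1)) = _
    induction n with
    | zero => simp [ee_nil]
    | succ n ihn =>
      rw [Finset.sum_Icc_succ_top (by omega), ihn, ih, ee_shift, ee_succ]
      have hp : (Nat.choose (n + (r+1)) (r+1) : ℝ) + (Nat.choose (n + 1 + r) r : ℝ)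
          = (Nat.choose (n + 1 + (r+1)) (r+1) : ℝ) := by
        have := Nat.succ_sub_one (n+1)
        have h3 : n + 1 + (r + 1) = (n + (r+1)) + 1 := by omega
        rw [h3]
        rw [Nat.choose_succ_succ' (n + (r+1)) r]
        push_cast
        have h4 : n + (r + 1) = n + 1 + r := by omega
        rw [h4]
        ring
      refine key _ _ _ _ _ _ _ (by positivity) (by positivity) hp ?_
      have h5 := Nat.add_one_mul_choose_eq (n + r + 1) r
      have h6 : n + r + 1 + 1 = n + 1 + (r + 1) := by omega
      have h7 : n + r + 1 = n + 1 + r := by omega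
      rw [h6, h7] at h5
      have := congrArg (fun x : ℕ => (x : ℝ)) h5
      push_cast at this ⊢
      linarith [this]

lemma stir1_gt : ∀ r l : ℕ, r < l → stir1 r l = 0 := by
  intro r
  induction r with
  | zero => intro l hl; obtain ⟨l', rfl⟩ := Nat.exists_eq_succ_of_ne_zero (by omega : l ≠ 0); rfl
  | succ r ih =>
    intro l hl
    obtain ⟨l', rfl⟩ := Nat.exists_eq_succ_of_ne_zero (by omega : l ≠ 0)
    show stir1 r l' + r * stir1 r (l' + 1) = 0
    rw [ih l' (by omega), ih (l' + 1) (by omega)]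
    simp

lemma stir1_poly (x : ℝ) : ∀ r, ∑ l ∈ Finset.range (r + 1), (stir1 r l : ℝ) * x ^ l
    = ∏ m ∈ Finset.range r, (x + m) := by
  intro r
  induction r with
  | zero => simp [stir1]
  | succ r ih =>
    rw [Finset.prod_range_succ, ← ih, Finset.sum_range_succ']
    have h0 : (stir1 (r + 1) 0 : ℝ) * x ^ 0 = 0 := by
      have : stir1 (r + 1) 0 = 0 := rfl
      simp [this]
    rw [h0, add_zero]
    have h1 : ∀ l, (stir1 (r + 1) (l + 1) : ℝ) = (stir1 r l : ℝ) + (r : ℝ) * (stir1 r (l + 1) : ℝ) := by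
      intro l
      show ((stir1 r l + r * stir1 r (l + 1) : ℕ) : ℝ) = _
      push_cast; ring
    calc ∑ l ∈ Finset.range (r + 1), (stir1 (r + 1) (l + 1) : ℝ) * x ^ (l + 1)
        = ∑ l ∈ Finset.range (r + 1), ((stir1 r l : ℝ) * x ^ l * x
            + (r : ℝ) * ((stir1 r (l + 1) : ℝ) * x ^ (l + 1))) := by
          refine Finset.sum_congr rfl fun l _ => ?_
          rw [h1, pow_succ]
          ring
      _ = (∑ l ∈ Finset.range (r + 1), (stir1 r l : ℝ) * x ^ l) * x
            + (r : ℝ) * ∑ l ∈ Finset.range (r + 1), (stir1 r (l + 1) : ℝ) * x ^ (l + 1) := by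
          rw [Finset.sum_add_distrib, ← Finset.sum_mul, ← Finset.mul_sum]
      _ = (∑ l ∈ Finset.range (r + 1), (stir1 r l : ℝ) * x ^ l) * (x + r) := by
          have h2 : ∑ l ∈ Finset.range (r + 1), (stir1 r (l + 1) : ℝ) * x ^ (l + 1)
              = ∑ l ∈ Finset.range (r + 1), (stir1 r l : ℝ) * x ^ l - (stir1 r 0 : ℝ) * x ^ 0 := by
            rw [eq_sub_iff_add_eq]
            rw [← Finset.sum_range_succ' (fun l => (stir1 r l : ℝ) * x ^ l) (r + 1)]
            rw [Finset.sum_range_succ]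
            rw [stir1_gt r (r + 1) (by omega)]
            simp
          rw [h2]
          rcases Nat.eq_zero_or_pos r with hr | hr
          · subst hr; simp
          · have : stir1 r 0 = 0 := by
              obtain ⟨r', rfl⟩ := Nat.exists_eq_succ_of_ne_zero (by omega : r ≠ 0)
              rfl
            rw [this]
            push_cast
            ring

lemma prodIcc (n r : ℕ) : (∏ m ∈ Finset.Icc 1 r, (n + m)) = r.factorial * Nat.choose (n + r) r := by
  induction r with
  | zero => simp
  | succ r ih =>
    rw [Finset.prod_Icc_succ_top (by omega), ih]
    have h5 := Nat.add_one_mul_choose_eq (n + r) r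
    rw [Nat.factorial_succ]
    have h6 : n + (r + 1) = (n + r) + 1 := by omega
    rw [h6]
    calc r.factorial * (n + r).choose r * (n + r + 1)
        = r.factorial * ((n + r + 1) * (n + r).choose r) := by ring
      _ = r.factorial * ((n + r + 1).choose (r + 1) * (r + 1)) := by rw [h5]
      _ = (r + 1) * r.factorial * (n + r + 1).choose (r + 1) := by ring

lemma stir_sum (r n : ℕ) (hn : 1 ≤ n) :
    ∑ l ∈ Finset.Icc 1 (r + 1), (stir1 (r + 1) l : ℝ) * (n : ℝ) ^ (l - 1)
      = (r.factorial : ℝ) * (Nat.choose (n + r) r : ℝ) := by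
  have hn0 : (n : ℝ) ≠ 0 := by positivity
  apply mul_left_cancel₀ hn0
  have hIcc : ∀ g : ℕ → ℝ, ∑ l ∈ Finset.Icc 1 (r + 1), g l = ∑ l ∈ Finset.range (r + 1), g (1 + l) := by
    intro g
    rw [← Finset.Ico_add_one_right_eq_Icc, Finset.sum_Ico_eq_sum_range]
    norm_num
  rw [Finset.mul_sum, hIcc]
  have hterm : ∀ l, (n : ℝ) * ((stir1 (r + 1) (1 + l) : ℝ) * (n : ℝ) ^ (1 + l - 1))
      = (stir1 (r + 1) (l + 1) : ℝ) * (n : ℝ) ^ (l + 1) := by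
    intro l
    have : 1 + l - 1 = l := by omega
    rw [this, pow_succ]
    have h1l : 1 + l = l + 1 := by omega
    rw [h1l]
    ring
  rw [Finset.sum_congr rfl fun l _ => hterm l]
  have hpoly := stir1_poly (n : ℝ) (r + 1)
  rw [Finset.sum_range_succ'] at hpoly
  have h0 : (stir1 (r + 1) 0 : ℝ) * (n : ℝ) ^ 0 = 0 := by
    have : stir1 (r + 1) 0 = 0 := rfl
    simp [this]
  rw [h0, add_zero] at hpoly
  rw [hpoly]
  rw [Finset.prod_range_succ']
  have hprod : ∏ m ∈ Finset.range r, ((n : ℝ) + ((m + 1 : ℕ) : ℝ))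
      = ((∏ m ∈ Finset.Icc 1 r, (n + m) : ℕ) : ℝ) := by
    rw [← Finset.Ico_add_one_right_eq_Icc, Finset.prod_Ico_eq_prod_range]
    push_cast
    refine Finset.prod_congr rfl fun m _ => ?_
    push_cast
    ring
  rw [hprod, prodIcc]
  push_cast
  ring

/-- formula (3.2): for `r ≥ 0`, `k, n ≥ 1`,
`h_n^{(r+1)}(k) = (1/r!) ∑_{l=1}^{r+1} [r+1; l] n^{l-1} ∑_{i+j=k} (-1)^i ζ_r^⋆({1}_i) ζ_{n+r}({1}_j)`. -/
theorem gh_explicit_formula (r k n : ℕ) (hk : 1 ≤ k) (hn : 1 ≤ n) :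
    gh n (r + 1) k =
      (1 / (Nat.factorial r : ℝ)) *
        ∑ l ∈ Finset.Icc 1 (r + 1), (stir1 (r + 1) l : ℝ) * (n : ℝ) ^ (l - 1) *
          ∑ i ∈ Finset.range (k + 1), (-1 : ℝ) ^ i * mhsn r i * mhn (n + r) (k - i) := by
  unfold gh
  cases k with
  | zero => omega
  | succ k' =>
    rw [if_neg (Nat.succ_ne_zero k')]
    have hr1 : r + 1 - 1 = r := rfl
    rw [hr1, hypAux_eq]
    have hin : ∀ l ∈ Finset.Icc 1 (r+1), (stir1 (r+1) l : ℝ) * (n:ℝ)^(l-1) *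
        (∑ i ∈ Finset.range (k'+1+1), (-1:ℝ)^i * mhsn r i * mhn (n+r) (k'+1-i))
        = (stir1 (r+1) l : ℝ) * (n:ℝ)^(l-1) * ff r (n+r) (k'+1) := fun l _ => rfl
    rw [Finset.sum_congr rfl hin, ← Finset.sum_mul, stir_sum r n hn, ff_eq_ee]
    have hf : (r.factorial : ℝ) ≠ 0 := by positivity
    field_simp
end
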